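/- arXiv:1308.1421 — 6 statements merged into one kernel-verified Lean document; each statement's English description precedes it below -/
import Mathlib

section
/- For nonnegative integers k, l, m with l ≥ k and m < k, the eigenfrequencies ω_{k,l} = π√(k²+l²) satisfy |ω_{k,l} − ω_{k,m}| ≥ π|l−m|/(2√2). -/
/-- Eigenfrequencies of the Neumann Laplacian on the unit square. -/
noncomputable def ω (k l : ℕ) : ℝ := Real.pi * Real.sqrt ((k : ℝ)^2 + (l : ℝ)^2)

set_option maxHeartbeats 1000000 in
theorem stmt_1 (k l m : ℕ) (hlk : l ≥ k) (hmk : m < k) :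
    |ω k l - ω k m| ≥ Real.pi * |(l : ℝ) - (m : ℝ)| / (2 * Real.sqrt 2) := by
  have hml : m < l := lt_of_lt_of_le hmk hlk
  have hlr : (m : ℝ) < l := by exact_mod_cast hml
  have hkl : (k : ℝ) ≤ l := by exact_mod_cast hlk
  have hmkr : (m : ℝ) < k := by exact_mod_cast hmk
  have hm0 : (0:ℝ) ≤ m := Nat.cast_nonneg m
  have hl1 : (1:ℝ) ≤ l := by
    have : 1 ≤ l := Nat.one_le_iff_ne_zero.mpr (by omega)
    exact_mod_cast this
  set a := Real.sqrt ((k : ℝ)^2 + (l : ℝ)^2) with hadef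
  set b := Real.sqrt ((k : ℝ)^2 + (m : ℝ)^2) with hbdef
  have ha0 : 0 ≤ a := Real.sqrt_nonneg _
  have hb0 : 0 ≤ b := Real.sqrt_nonneg _
  have ha2 : a^2 = (k : ℝ)^2 + (l : ℝ)^2 := Real.sq_sqrt (by positivity)
  have hb2 : b^2 = (k : ℝ)^2 + (m : ℝ)^2 := Real.sq_sqrt (by positivity)
  have hba : b ≤ a := by
    apply Real.sqrt_le_sqrt
    nlinarith
  have hs2 : (0:ℝ) < Real.sqrt 2 := Real.sqrt_pos.mpr (by norm_num)
  have hs22 : Real.sqrt 2 ^ 2 = 2 := Real.sq_sqrt (by norm_num)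
  have hal : a ≤ Real.sqrt 2 * l := by
    have h1 : a ≤ Real.sqrt (2 * (l:ℝ)^2) := by
      apply Real.sqrt_le_sqrt; nlinarith
    have h2 : Real.sqrt (2 * (l:ℝ)^2) = Real.sqrt 2 * l := by
      rw [Real.sqrt_mul (by norm_num), Real.sqrt_sq (by linarith)]
    linarith [h1, h2.le]
  have hbl : b ≤ Real.sqrt 2 * l := by
    have h1 : b ≤ Real.sqrt (2 * (l:ℝ)^2) := by
      apply Real.sqrt_le_sqrt; nlinarith
    have h2 : Real.sqrt (2 * (l:ℝ)^2) = Real.sqrt 2 * l := by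
      rw [Real.sqrt_mul (by norm_num), Real.sqrt_sq (by linarith)]
    linarith [h1, h2.le]
  have hkey : (l:ℝ) - m ≤ (a - b) * (2 * Real.sqrt 2) := by
    have hdiff : (a - b) * (a + b) = ((l:ℝ) - m) * ((l:ℝ) + m) := by nlinarith
    have hsum : a + b ≤ 2 * Real.sqrt 2 * l := by linarith
    have h3 : ((l:ℝ) - m) * ((l:ℝ) + m) ≤ (a - b) * (2 * Real.sqrt 2 * l) := by
      calc ((l:ℝ) - m) * ((l:ℝ) + m) = (a - b) * (a + b) := hdiff.symm
        _ ≤ (a - b) * (2 * Real.sqrt 2 * l) := by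
            apply mul_le_mul_of_nonneg_left hsum (by linarith)
    nlinarith [h3]
  have hpi : 0 < Real.pi := Real.pi_pos
  have hω : ω k l - ω k m = Real.pi * (a - b) := by
    simp only [ω, hadef, hbdef]; ring
  rw [hω, abs_of_nonneg (by nlinarith), abs_of_nonneg (by linarith)]
  rw [ge_iff_le, div_le_iff₀ (by positivity)]
  have := mul_le_mul_of_nonneg_left hkey hpi.le
  nlinarith [this]
end

section
/- For all nonnegative integers k, l, m with l ≥ k, the uniform lower bound |ω_{k,l} − ω_{k,m}| ≥ π|l−m|/(2√2) holds. -/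
theorem stmt_2 (k l m : ℕ) (hlk : l ≥ k) :
    |ω k l - ω k m| ≥ Real.pi * |(l : ℝ) - (m : ℝ)| / (2 * Real.sqrt 2) := by
  have hπ := Real.pi_pos
  have hkl : (k:ℝ) ≤ (l:ℝ) := by exact_mod_cast hlk
  have hk0 : (0:ℝ) ≤ (k:ℝ) := Nat.cast_nonneg k
  have hl0 : (0:ℝ) ≤ (l:ℝ) := Nat.cast_nonneg l
  have hm0 : (0:ℝ) ≤ (m:ℝ) := Nat.cast_nonneg m
  set a : ℝ := (k:ℝ)^2 + (l:ℝ)^2 with ha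
  set b : ℝ := (k:ℝ)^2 + (m:ℝ)^2 with hb
  have ha0 : (0:ℝ) ≤ a := by positivity
  have hb0 : (0:ℝ) ≤ b := by positivity
  have hs2 : Real.sqrt 2 ^ 2 = 2 := Real.sq_sqrt (by norm_num)
  have hs2pos : (0:ℝ) < Real.sqrt 2 := Real.sqrt_pos.mpr (by norm_num)
  have hs2ge1 : (1:ℝ) ≤ Real.sqrt 2 := by
    nlinarith [hs2, hs2pos]
  have key : |Real.sqrt a - Real.sqrt b| ≥ |(l:ℝ) - (m:ℝ)| / (2 * Real.sqrt 2) := by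
    rcases eq_or_lt_of_le (by positivity : (0:ℝ) ≤ (l:ℝ) + (m:ℝ)) with h0 | hpos
    · have hl : (l:ℝ) = 0 := by linarith
      have hm : (m:ℝ) = 0 := by linarith
      simp [hl, hm]
    · have hsa : Real.sqrt a ≤ Real.sqrt 2 * (l:ℝ) := by
        rw [ha]
        have : (k:ℝ)^2 + (l:ℝ)^2 ≤ (Real.sqrt 2 * (l:ℝ))^2 := by
          nlinarith [hs2]
        calc Real.sqrt ((k:ℝ)^2 + (l:ℝ)^2) ≤ Real.sqrt ((Real.sqrt 2 * (l:ℝ))^2) :=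
              Real.sqrt_le_sqrt this
          _ = Real.sqrt 2 * (l:ℝ) := Real.sqrt_sq (by positivity)
      have hsb : Real.sqrt b ≤ (k:ℝ) + (m:ℝ) := by
        rw [hb]
        calc Real.sqrt ((k:ℝ)^2 + (m:ℝ)^2) ≤ Real.sqrt (((k:ℝ) + (m:ℝ))^2) :=
              Real.sqrt_le_sqrt (by nlinarith)
          _ = (k:ℝ) + (m:ℝ) := Real.sqrt_sq (by positivity)
      have hsum : Real.sqrt a + Real.sqrt b ≤ 2 * Real.sqrt 2 * ((l:ℝ) + (m:ℝ)) := by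
        nlinarith [hs2ge1]
      have hdiff : |Real.sqrt a - Real.sqrt b| * (Real.sqrt a + Real.sqrt b) = |a - b| := by
        have h1 : (Real.sqrt a - Real.sqrt b) * (Real.sqrt a + Real.sqrt b) = a - b := by
          have := Real.sq_sqrt ha0
          have := Real.sq_sqrt hb0
          ring_nf
          nlinarith [Real.sq_sqrt ha0, Real.sq_sqrt hb0]
        calc |Real.sqrt a - Real.sqrt b| * (Real.sqrt a + Real.sqrt b)
            = |(Real.sqrt a - Real.sqrt b) * (Real.sqrt a + Real.sqrt b)| := by
              rw [abs_mul, abs_of_nonneg (show (0:ℝ) ≤ Real.sqrt a + Real.sqrt b by positivity)]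
          _ = |a - b| := by rw [h1]
      have hab : |a - b| = |(l:ℝ) - (m:ℝ)| * ((l:ℝ) + (m:ℝ)) := by
        have : a - b = ((l:ℝ) - (m:ℝ)) * ((l:ℝ) + (m:ℝ)) := by ring
        rw [this, abs_mul, abs_of_pos hpos]
      rw [ge_iff_le, div_le_iff₀ (by positivity)]
      have habs0 : (0:ℝ) ≤ |Real.sqrt a - Real.sqrt b| := abs_nonneg _
      have h2 : |(l:ℝ) - (m:ℝ)| * ((l:ℝ) + (m:ℝ)) ≤
          |Real.sqrt a - Real.sqrt b| * (2 * Real.sqrt 2) * ((l:ℝ) + (m:ℝ)) := by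
        calc |(l:ℝ) - (m:ℝ)| * ((l:ℝ) + (m:ℝ)) = |a - b| := hab.symm
          _ = |Real.sqrt a - Real.sqrt b| * (Real.sqrt a + Real.sqrt b) := hdiff.symm
          _ ≤ |Real.sqrt a - Real.sqrt b| * (2 * Real.sqrt 2 * ((l:ℝ) + (m:ℝ))) :=
              mul_le_mul_of_nonneg_left hsum habs0
          _ = |Real.sqrt a - Real.sqrt b| * (2 * Real.sqrt 2) * ((l:ℝ) + (m:ℝ)) := by ring
      exact (mul_le_mul_iff_of_pos_right hpos).mp h2
  have hω : |ω k l - ω k m| = Real.pi * |Real.sqrt a - Real.sqrt b| := by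
    unfold ω
    rw [← mul_sub, abs_mul, abs_of_pos hπ]
  rw [hω, ge_iff_le, div_le_iff₀ (by positivity)]
  rw [ge_iff_le, div_le_iff₀ (by positivity)] at key
  calc Real.pi * |(l:ℝ) - (m:ℝ)| ≤ Real.pi * (|Real.sqrt a - Real.sqrt b| * (2 * Real.sqrt 2)) := by
        gcongr
    _ = Real.pi * |Real.sqrt a - Real.sqrt b| * (2 * Real.sqrt 2) := by ring
end

section
/- For nonnegative integers k, l, n, m with l ≥ k, l ≥ n, and m ≥ l, the 3D eigenfrequencies ω_{k,l,n} = π√(k²+l²+n²) satisfy |ω_{k,l,n} − ω_{k,m,n}| ≥ π|l−m|/√3. -/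
/-- Eigenfrequencies of the Neumann Laplacian on the unit cube. -/
noncomputable def ω3 (k l n : ℕ) : ℝ :=
  Real.pi * Real.sqrt ((k : ℝ)^2 + (l : ℝ)^2 + (n : ℝ)^2)

theorem stmt_3 (k l n m : ℕ) (hlk : l ≥ k) (hln : l ≥ n) (hml : m ≥ l) :
    |ω3 k l n - ω3 k m n| ≥ Real.pi * |(l : ℝ) - (m : ℝ)| / Real.sqrt 3 := by
  have hk : (k : ℝ) ≤ l := by exact_mod_cast hlk
  have hn : (n : ℝ) ≤ l := by exact_mod_cast hln
  have hm : (l : ℝ) ≤ m := by exact_mod_cast hml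
  have hk0 : (0 : ℝ) ≤ k := Nat.cast_nonneg k
  have hn0 : (0 : ℝ) ≤ n := Nat.cast_nonneg n
  have hl0 : (0 : ℝ) ≤ l := Nat.cast_nonneg l
  set A : ℝ := (k : ℝ)^2 + (l : ℝ)^2 + (n : ℝ)^2 with hA
  set B : ℝ := (k : ℝ)^2 + (m : ℝ)^2 + (n : ℝ)^2 with hB
  have hA0 : 0 ≤ A := by positivity
  have hB0 : 0 ≤ B := by positivity
  set a := Real.sqrt A with ha
  set b := Real.sqrt B with hb
  have ha2 : a ^ 2 = A := Real.sq_sqrt hA0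
  have hb2 : b ^ 2 = B := Real.sq_sqrt hB0
  have ha0 : 0 ≤ a := Real.sqrt_nonneg _
  have hb0 : 0 ≤ b := Real.sqrt_nonneg _
  have hab : a ≤ b := Real.sqrt_le_sqrt (by nlinarith)
  set s := Real.sqrt 3 with hs
  have hs2 : s ^ 2 = 3 := Real.sq_sqrt (by norm_num)
  have hs0 : 0 < s := Real.sqrt_pos.mpr (by norm_num)
  -- a ≤ s * l, b ≤ s * m
  have hal : a ≤ s * l := by
    have : A ≤ 3 * (l:ℝ)^2 := by nlinarith
    calc a ≤ Real.sqrt (3 * (l:ℝ)^2) := Real.sqrt_le_sqrt this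
    _ = s * l := by
        rw [Real.sqrt_mul (by norm_num)]
        congr 1
        exact Real.sqrt_sq hl0
  have hbm : b ≤ s * m := by
    have : B ≤ 3 * (m:ℝ)^2 := by nlinarith
    calc b ≤ Real.sqrt (3 * (m:ℝ)^2) := Real.sqrt_le_sqrt this
    _ = s * m := by
        rw [Real.sqrt_mul (by norm_num)]
        congr 1
        exact Real.sqrt_sq (le_trans hl0 hm)
  have key : s * (b - a) ≥ (m : ℝ) - l := by
    rcases eq_or_lt_of_le hm with h | h
    · simp [← h]; nlinarith
    · have hml0 : 0 < (l:ℝ) + m := by linarith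
      have hdiff : (b - a) * (b + a) = ((m:ℝ) - l) * ((m:ℝ) + l) := by
        linear_combination hb2 - ha2 + hB - hA
      have hsum : b + a ≤ s * ((m:ℝ) + l) := by linarith
      have h1 : ((m:ℝ) - l) * ((m:ℝ) + l) ≤ (s * (b - a)) * ((m:ℝ) + l) := by
        calc ((m:ℝ) - l) * ((m:ℝ) + l) = (b - a) * (b + a) := hdiff.symm
        _ ≤ (b - a) * (s * ((m:ℝ) + l)) :=
            mul_le_mul_of_nonneg_left hsum (by linarith)
        _ = (s * (b - a)) * ((m:ℝ) + l) := by ring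
      exact le_of_mul_le_mul_right h1 (by linarith)
  have habs1 : |(l : ℝ) - m| = (m : ℝ) - l := by
    rw [abs_sub_comm]; exact abs_of_nonneg (by linarith)
  have hω : |ω3 k l n - ω3 k m n| = Real.pi * (b - a) := by
    unfold ω3
    rw [← hA, ← hB, ← ha, ← hb, ← mul_sub, abs_mul, abs_of_nonneg Real.pi_pos.le,
      abs_sub_comm, abs_of_nonneg (by linarith)]
  rw [hω, habs1, ge_iff_le, div_le_iff₀ hs0]
  calc Real.pi * ((m:ℝ) - l) ≤ Real.pi * (s * (b - a)) :=
      mul_le_mul_of_nonneg_left key Real.pi_pos.le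
  _ = Real.pi * (b - a) * s := by ring
end

section
/- For all nonnegative integers k, l, n, m with l ≥ k and l ≥ n, the 3D eigenfrequencies satisfy |ω_{k,l,n} − ω_{k,m,n}| ≥ π|l−m|/(2√3). -/
lemma aux3 (k l n m : ℕ) (hlk : k ≤ l) (hln : n ≤ l) (hml : m ≤ l) :
    ω3 k l n - ω3 k m n ≥ Real.pi * ((l : ℝ) - (m : ℝ)) / (2 * Real.sqrt 3) := by
  rcases Nat.eq_zero_or_pos l with rfl | hl
  · obtain rfl : k = 0 := Nat.le_zero.mp hlk
    obtain rfl : n = 0 := Nat.le_zero.mp hln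
    obtain rfl : m = 0 := Nat.le_zero.mp hml
    simp [ω3]
  · have hs0 : (0:ℝ) < Real.sqrt 3 := Real.sqrt_pos.mpr (by norm_num)
    have hs2 : (Real.sqrt 3)^2 = 3 := Real.sq_sqrt (by norm_num)
    have hkl : (k:ℝ) ≤ l := by exact_mod_cast hlk
    have hnl : (n:ℝ) ≤ l := by exact_mod_cast hln
    have hml' : (m:ℝ) ≤ l := by exact_mod_cast hml
    have hl1 : (1:ℝ) ≤ l := by exact_mod_cast hl
    have hk0 : (0:ℝ) ≤ k := Nat.cast_nonneg k
    have hn0 : (0:ℝ) ≤ n := Nat.cast_nonneg n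
    have hm0 : (0:ℝ) ≤ m := Nat.cast_nonneg m
    set A : ℝ := (k : ℝ)^2 + (l : ℝ)^2 + (n : ℝ)^2 with hA
    set B : ℝ := (k : ℝ)^2 + (m : ℝ)^2 + (n : ℝ)^2 with hB
    have hA0 : 0 ≤ A := by positivity
    have hB0 : 0 ≤ B := by positivity
    set a := Real.sqrt A with ha
    set b := Real.sqrt B with hb
    have ha2 : a^2 = A := Real.sq_sqrt hA0
    have hb2 : b^2 = B := Real.sq_sqrt hB0
    have ha0 : 0 ≤ a := Real.sqrt_nonneg A
    have hb0 : 0 ≤ b := Real.sqrt_nonneg B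
    have hal : a ≤ Real.sqrt 3 * l := by
      rw [show Real.sqrt 3 * (l:ℝ) = Real.sqrt (3 * (l:ℝ)^2) by
        rw [Real.sqrt_mul (by norm_num), Real.sqrt_sq (by positivity)]]
      apply Real.sqrt_le_sqrt
      nlinarith
    have hbl : b ≤ Real.sqrt 3 * l := by
      rw [show Real.sqrt 3 * (l:ℝ) = Real.sqrt (3 * (l:ℝ)^2) by
        rw [Real.sqrt_mul (by norm_num), Real.sqrt_sq (by positivity)]]
      apply Real.sqrt_le_sqrt
      nlinarith
    have hab : b ≤ a := Real.sqrt_le_sqrt (by nlinarith)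
    have e1 : (a - b) * (a + b) = (l:ℝ)^2 - (m:ℝ)^2 := by
      have : a^2 - b^2 = (l:ℝ)^2 - (m:ℝ)^2 := by rw [ha2, hb2]; ring
      linear_combination this
    have hp : (0:ℝ) ≤ (a - b) * (2 * Real.sqrt 3 * l - (a + b)) :=
      mul_nonneg (by linarith) (by linarith)
    have h3 : ((l:ℝ)^2 - (m:ℝ)^2) ≤ (a - b) * (2 * Real.sqrt 3 * l) := by
      linarith [hp, e1]
    have h4 : ((l:ℝ) - m) * l ≤ ((a - b) * (2 * Real.sqrt 3)) * l := by
      linarith [h3, mul_nonneg (sub_nonneg.mpr hml') hm0]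
    have key : ((l:ℝ) - m) / (2 * Real.sqrt 3) ≤ a - b := by
      rw [div_le_iff₀ (by positivity)]
      exact le_of_mul_le_mul_right h4 (by linarith)
    have hπ : (0:ℝ) ≤ Real.pi := Real.pi_pos.le
    have h2 := mul_le_mul_of_nonneg_left key hπ
    show Real.pi * a - Real.pi * b ≥ _
    calc Real.pi * ((l:ℝ) - m) / (2 * Real.sqrt 3)
        = Real.pi * (((l:ℝ) - m) / (2 * Real.sqrt 3)) := by ring
      _ ≤ Real.pi * (a - b) := h2
      _ = Real.pi * a - Real.pi * b := by ring

theorem stmt_4 (k l n m : ℕ) (hlk : l ≥ k) (hln : l ≥ n) :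
    |ω3 k l n - ω3 k m n| ≥ Real.pi * |(l : ℝ) - (m : ℝ)| / (2 * Real.sqrt 3) := by
  rcases le_total m l with h | h
  · have := aux3 k l n m hlk hln h
    have habs : |(l:ℝ) - m| = (l:ℝ) - m := abs_of_nonneg (by
      have : (m:ℝ) ≤ l := by exact_mod_cast h
      linarith)
    rw [habs]
    exact le_trans this (le_abs_self _)
  · have := aux3 k m n l (hlk.trans h) (hln.trans h) h
    have habs : |(l:ℝ) - m| = (m:ℝ) - l := by
      rw [abs_sub_comm]
      exact abs_of_nonneg (by
        have : (l:ℝ) ≤ m := by exact_mod_cast h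
        linarith)
    rw [habs, abs_sub_comm]
    exact le_trans this (le_abs_self _)
end

section
/- Let B, T > 0 and suppose for fixed k, l with l ≥ k (not both zero) the sequence (h_m) satisfies |h_m| ≤ 1 for all m ≥ 0. Then |η̂(2Tω_{k,l})/η̂(0)·h_l + Σ_{m≠l} [η̂(T(ω_{k,l}−ω_{k,m})) + η̂(T(ω_{k,l}+ω_{k,m}))]/η̂(0)·h_m| ≤ (B/(η̂(0)·T²π²))·(2 + 17π²/6), given |η̂(ξ)| ≤ B/(1+ξ²) for all ξ and η̂(0) > 0. In particular, dividing through, each entry e_{k,l} of A(H) satisfies |e_{k,l}| ≤ B(12+17π²)/(6T²π²) when η̂(0) = 1. -/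
open Real Finset

set_option maxHeartbeats 1000000 in
theorem stmt_9 (B T : ℝ) (hB : 0 < B) (hT : 0 < T) (ηhat : ℝ → ℝ)
    (hdecay : ∀ ξ : ℝ, |ηhat ξ| ≤ B / (1 + ξ^2)) (hη0 : ηhat 0 = 1)
    (k l : ℕ) (hlk : l ≥ k) (hkl : ¬(k = 0 ∧ l = 0))
    (h : ℕ → ℝ) (hh : ∀ m : ℕ, |h m| ≤ 1) :
    |ηhat (2 * T * ω k l) / ηhat 0 * h l +
        ∑' m : ℕ, (if m = l then 0 else
          (ηhat (T * (ω k l - ω k m)) + ηhat (T * (ω k l + ω k m))) / ηhat 0 * h m)| ≤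
      B / (ηhat 0 * T^2 * Real.pi^2) * (2 + 17 * Real.pi^2 / 6) := by
  have hπ : (0:ℝ) < Real.pi := Real.pi_pos
  simp only [hη0, div_one, one_mul]
  set c : ℝ := B / (T^2 * Real.pi^2) with hc_def
  have hc : 0 < c := by positivity
  -- basic facts
  have hl1 : 1 ≤ l := by omega
  set S : ℕ → ℝ := fun m => Real.sqrt ((k:ℝ)^2 + (m:ℝ)^2) with hS_def
  have hω : ∀ m, ω k m = Real.pi * S m := fun m => rfl
  have hS0 : ∀ m, 0 ≤ S m := fun m => Real.sqrt_nonneg _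
  have hSsq : ∀ m, (S m)^2 = (k:ℝ)^2 + (m:ℝ)^2 := fun m =>
    Real.sq_sqrt (by positivity)
  have hSm : ∀ m : ℕ, (m:ℝ) ≤ S m := by
    intro m
    rw [show ((m:ℝ)) = Real.sqrt ((m:ℝ)^2) from (Real.sqrt_sq (by positivity)).symm]
    exact Real.sqrt_le_sqrt (by nlinarith [sq_nonneg ((k:ℝ))])
  have hkl' : (k:ℝ) ≤ (l:ℝ) := by exact_mod_cast hlk
  have hSl1 : (1:ℝ) ≤ S l := le_trans (by exact_mod_cast hl1) (hSm l)
  have hSl_le : S l ≤ Real.sqrt 2 * (l:ℝ) := by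
    have h1 : S l ≤ Real.sqrt (2 * (l:ℝ)^2) := Real.sqrt_le_sqrt (by nlinarith)
    rwa [Real.sqrt_mul (by norm_num), Real.sqrt_sq (Nat.cast_nonneg l)] at h1
  have hm0 : ∀ m : ℕ, (0:ℝ) ≤ (m:ℝ) := fun m => Nat.cast_nonneg m
  have hSm_le : ∀ m : ℕ, S m ≤ (l:ℝ) + m := by
    intro m
    have h1 : S m ≤ Real.sqrt (((l:ℝ) + m)^2) :=
      Real.sqrt_le_sqrt (by nlinarith [hm0 m, hm0 l, hm0 k, hkl', mul_nonneg (hm0 l) (hm0 m)])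
    rwa [Real.sqrt_sq (by positivity)] at h1
  have h2sq : (Real.sqrt 2)^2 = 2 := Real.sq_sqrt (by norm_num)
  have h2nn : (0:ℝ) ≤ Real.sqrt 2 := Real.sqrt_nonneg 2
  have h215 : Real.sqrt 2 ≤ 3/2 := by nlinarith
  -- key gap estimate
  have hdiff : ∀ m : ℕ, m ≠ l → ((l:ℝ) - m)^2 / 8 ≤ (S l - S m)^2 := by
    intro m hm
    have ha : (0:ℝ) ≤ (l:ℝ) := Nat.cast_nonneg l
    have hb : (0:ℝ) ≤ (m:ℝ) := Nat.cast_nonneg m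
    have hsum : S l + S m ≤ (5/2) * ((l:ℝ) + m) := by
      have := hSm_le m
      nlinarith [hSl_le]
    have hsum8 : (S l + S m)^2 ≤ 8 * ((l:ℝ) + m)^2 := by
      nlinarith [hS0 l, hS0 m]
    have heq : (S l - S m) * (S l + S m) = ((l:ℝ) - m) * ((l:ℝ) + m) := by
      have h1 := hSsq l
      have h2 := hSsq m
      linear_combination h1 - h2
    have heq2 : (S l - S m)^2 * (S l + S m)^2 = ((l:ℝ) - m)^2 * ((l:ℝ) + m)^2 := by
      rw [← mul_pow, ← mul_pow, heq]
    have hstpos : 0 < S l + S m := by linarith [hS0 m]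
    have hstpos2 : 0 < (S l + S m)^2 := by positivity
    have hprod : ((l:ℝ) - m)^2 * (S l + S m)^2 ≤ ((l:ℝ) - m)^2 * (8 * ((l:ℝ) + m)^2) :=
      mul_le_mul_of_nonneg_left hsum8 (sq_nonneg _)
    have hfin : 0 ≤ (S l + S m)^2 * ((S l - S m)^2 - ((l:ℝ) - m)^2/8) := by
      nlinarith [heq2, hprod]
    nlinarith [hfin, hstpos2]
  -- absolute difference at least 1 for m ≠ l
  have habs1 : ∀ m : ℕ, m ≠ l → (1:ℝ) ≤ ((l:ℝ) - m)^2 := by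
    intro m hm
    rcases hm.lt_or_gt with h1 | h1
    · have : (m:ℝ) + 1 ≤ l := by exact_mod_cast h1
      nlinarith
    · have : (l:ℝ) + 1 ≤ m := by exact_mod_cast h1
      nlinarith
  -- the Basel-type sums
  have hbasel : HasSum (fun n : ℕ => (1:ℝ) / (n:ℝ)^2) (Real.pi^2/6) := hasSum_zeta_two
  have he : HasSum (fun n : ℕ => (1:ℝ) / ((n:ℝ)+1)^2) (Real.pi^2/6) := by
    have h1 := (hasSum_nat_add_iff' (f := fun n : ℕ => (1:ℝ)/(n:ℝ)^2) 1).2 hbasel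
    simp only [Finset.sum_range_one, Nat.cast_zero] at h1
    norm_num at h1
    convert h1 using 2 with n
    case e'_3 => rfl
    push_cast
    ring
  set e : ℕ → ℝ := fun m => 1 / ((m:ℝ)+1)^2 with he_def
  have he_nn : ∀ m, 0 ≤ e m := fun m => by positivity
  set d : ℕ → ℝ := fun m => if m = l then 0 else 1 / ((l:ℝ) - m)^2 with hd_def
  have hd_nn : ∀ m, 0 ≤ d m := by
    intro m; simp only [hd_def]; split <;> positivity
  have hd_shift : ∀ i : ℕ, d (i + (l+1)) = e i := by
    intro i
    have hne : i + (l+1) ≠ l := by omega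
    simp only [hd_def, he_def, if_neg hne]
    congr 1
    push_cast
    ring
  have hd_sum : Summable d := by
    rw [← summable_nat_add_iff (l+1)]
    simp only [hd_shift]
    exact he.summable
  have hd_tsum : ∑' m, d m ≤ Real.pi^2/3 := by
    rw [← Summable.sum_add_tsum_nat_add (l+1) hd_sum]
    have htail : ∑' i : ℕ, d (i + (l+1)) = Real.pi^2/6 := by
      simp only [hd_shift]; exact he.tsum_eq
    have hhead : ∑ i ∈ range (l+1), d i ≤ Real.pi^2/6 := by
      rw [Finset.sum_range_succ, show d l = 0 by simp [hd_def], add_zero]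
      have hre : ∑ i ∈ range l, d i = ∑ i ∈ range l, e i := by
        rw [← Finset.sum_range_reflect (fun i => e i) l]
        refine Finset.sum_congr rfl ?_
        intro i hi
        rw [Finset.mem_range] at hi
        have hne : i ≠ l := by omega
        simp only [hd_def, he_def, if_neg hne]
        congr 1
        have : ((l - 1 - i : ℕ) : ℝ) = (l:ℝ) - 1 - i := by
          push_cast [Nat.cast_sub (by omega : 1 + i ≤ l)]
          have : ((l - 1 - i : ℕ) : ℝ) = ((l - (1 + i) : ℕ) : ℝ) := by congr 1; omega
          rw [this, Nat.cast_sub (by omega : 1 + i ≤ l)]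
          push_cast; ring
        rw [this]; ring
      rw [hre]
      exact Summable.sum_le_tsum (range l) (fun i _ => he_nn i) he.summable |>.trans_eq he.tsum_eq
    linarith
  -- summand bound
  set F : ℕ → ℝ := fun m => if m = l then 0 else
    (ηhat (T * (ω k l - ω k m)) + ηhat (T * (ω k l + ω k m))) * h m with hF_def
  set g : ℕ → ℝ := fun m => c * 8 * d m + c * e m with hg_def
  have hFg : ∀ m, |F m| ≤ g m := by
    intro m
    by_cases hm : m = l
    · simp only [hF_def, hg_def, hm, if_pos rfl, abs_zero]
      have := hd_nn l
      have := he_nn l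
      positivity
    · simp only [hF_def, hg_def, if_neg hm]
      have hb1 : |ηhat (T * (ω k l - ω k m))| ≤ c * 8 * d m := by
        have hx := hdecay (T * (ω k l - ω k m))
        have hx2 : T^2 * Real.pi^2 * (((l:ℝ) - m)^2 / 8) ≤ (T * (ω k l - ω k m))^2 := by
          have h1 := hdiff m hm
          have h2 : (T * (ω k l - ω k m))^2 = T^2 * Real.pi^2 * (S l - S m)^2 := by
            rw [hω l, hω m]; ring
          rw [h2]
          have : (0:ℝ) ≤ T^2 * Real.pi^2 := by positivity
          nlinarith
        have hpos : 0 < T^2 * Real.pi^2 * (((l:ℝ) - m)^2 / 8) := by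
          have := habs1 m hm
          have h8 : (0:ℝ) < ((l:ℝ) - m)^2 := by linarith
          positivity
        have hle : B / (1 + (T * (ω k l - ω k m))^2)
            ≤ B / (T^2 * Real.pi^2 * (((l:ℝ) - m)^2 / 8)) := by
          apply div_le_div_of_nonneg_left hB.le hpos
          linarith
        have heqc : B / (T^2 * Real.pi^2 * (((l:ℝ) - m)^2 / 8)) = c * 8 * d m := by
          have hne : ((l:ℝ) - m)^2 ≠ 0 := by
            have := habs1 m hm; intro hcon; rw [hcon] at this; linarith
          simp only [hd_def, if_neg hm, hc_def]
          field_simp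
          try ring
        calc |ηhat (T * (ω k l - ω k m))| ≤ B / (1 + (T * (ω k l - ω k m))^2) := hx
          _ ≤ B / (T^2 * Real.pi^2 * (((l:ℝ) - m)^2 / 8)) := hle
          _ = c * 8 * d m := heqc
      have hb2 : |ηhat (T * (ω k l + ω k m))| ≤ c * e m := by
        have hx := hdecay (T * (ω k l + ω k m))
        have hsum_ge : Real.pi * ((m:ℝ) + 1) ≤ ω k l + ω k m := by
          rw [hω l, hω m]
          have := hSm m
          have := hSl1
          nlinarith
        have hx2 : T^2 * Real.pi^2 * ((m:ℝ) + 1)^2 ≤ (T * (ω k l + ω k m))^2 := by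
          have h0 : (0:ℝ) ≤ Real.pi * ((m:ℝ) + 1) := by positivity
          have h1 : (Real.pi*((m:ℝ)+1))^2 ≤ (ω k l + ω k m)^2 := by
            nlinarith [hsum_ge, h0]
          calc T^2 * Real.pi^2 * ((m:ℝ)+1)^2 = T^2 * (Real.pi*((m:ℝ)+1))^2 := by ring
            _ ≤ T^2 * (ω k l + ω k m)^2 := mul_le_mul_of_nonneg_left h1 (sq_nonneg T)
            _ = (T * (ω k l + ω k m))^2 := by ring
        have hpos : (0:ℝ) < T^2 * Real.pi^2 * ((m:ℝ) + 1)^2 := by positivity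
        have hle : B / (1 + (T * (ω k l + ω k m))^2)
            ≤ B / (T^2 * Real.pi^2 * ((m:ℝ) + 1)^2) := by
          apply div_le_div_of_nonneg_left hB.le hpos
          linarith
        have heqc : B / (T^2 * Real.pi^2 * ((m:ℝ) + 1)^2) = c * e m := by
          simp only [he_def, hc_def]
          field_simp
          try ring
        calc |ηhat (T * (ω k l + ω k m))| ≤ B / (1 + (T * (ω k l + ω k m))^2) := hx
          _ ≤ B / (T^2 * Real.pi^2 * ((m:ℝ) + 1)^2) := hle
          _ = c * e m := heqc
      calc |(ηhat (T * (ω k l - ω k m)) + ηhat (T * (ω k l + ω k m))) * h m|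
          = |ηhat (T * (ω k l - ω k m)) + ηhat (T * (ω k l + ω k m))| * |h m| :=
            abs_mul _ _
        _ ≤ (|ηhat (T * (ω k l - ω k m))| + |ηhat (T * (ω k l + ω k m))|) * 1 := by
            apply mul_le_mul (abs_add_le _ _) (hh m) (abs_nonneg _)
            positivity
        _ = |ηhat (T * (ω k l - ω k m))| + |ηhat (T * (ω k l + ω k m))| := by ring
        _ ≤ c * 8 * d m + c * e m := add_le_add hb1 hb2
  -- summability
  have hg_sum : Summable g := ((hd_sum.mul_left (c * 8)).add (he.summable.mul_left c))
  have hFabs_sum : Summable (fun m => |F m|) :=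
    Summable.of_nonneg_of_le (fun m => abs_nonneg _) hFg hg_sum
  have hF_sum : Summable F := hFabs_sum.of_abs
  have hg_tsum : ∑' m, g m ≤ c * (17 * Real.pi^2 / 6) := by
    have h1 : ∑' m, g m = c * 8 * (∑' m, d m) + c * (∑' m, e m) := by
      rw [hg_def]
      rw [Summable.tsum_add (hd_sum.mul_left (c * 8)) (he.summable.mul_left c),
        tsum_mul_left, tsum_mul_left]
    rw [h1, he.tsum_eq]
    have h2 : c * 8 * (∑' m, d m) ≤ c * 8 * (Real.pi^2/3) :=
      mul_le_mul_of_nonneg_left hd_tsum (by positivity)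
    nlinarith
  -- diagonal term
  have hdiag : |ηhat (2 * T * ω k l) * h l| ≤ c * 2 := by
    have hx := hdecay (2 * T * ω k l)
    have hx2 : T^2 * Real.pi^2 ≤ (2 * T * ω k l)^2 := by
      have h1 : (2 * T * ω k l)^2 = 4 * T^2 * Real.pi^2 * (S l)^2 := by
        rw [hω l]; ring
      rw [h1]
      have hS2 : 1 ≤ (S l)^2 := by nlinarith [hSl1]
      nlinarith [mul_le_mul_of_nonneg_left hS2 (sq_nonneg (T * Real.pi))]
    have hpos : (0:ℝ) < T^2 * Real.pi^2 := by positivity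
    have hle : B / (1 + (2 * T * ω k l)^2) ≤ B / (T^2 * Real.pi^2) := by
      apply div_le_div_of_nonneg_left hB.le hpos
      linarith
    calc |ηhat (2 * T * ω k l) * h l| = |ηhat (2 * T * ω k l)| * |h l| := abs_mul _ _
      _ ≤ (B / (1 + (2 * T * ω k l)^2)) * 1 :=
          mul_le_mul hx (hh l) (abs_nonneg _) (by positivity)
      _ = B / (1 + (2 * T * ω k l)^2) := by ring
      _ ≤ B / (T^2 * Real.pi^2) := hle
      _ = c := rfl
      _ ≤ c * 2 := by linarith
  -- combine
  have hmain : |ηhat (2 * T * ω k l) * h l + ∑' m, F m|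
      ≤ c * 2 + c * (17 * Real.pi^2 / 6) := by
    calc |ηhat (2 * T * ω k l) * h l + ∑' m, F m|
        ≤ |ηhat (2 * T * ω k l) * h l| + |∑' m, F m| := abs_add_le _ _
      _ ≤ c * 2 + c * (17 * Real.pi^2 / 6) := by
          apply add_le_add hdiag
          calc |∑' m, F m| ≤ ∑' m, |F m| := by
                have hn : Summable (fun m => ‖F m‖) := by
                  simpa [Real.norm_eq_abs] using hFabs_sum
                simpa [Real.norm_eq_abs] using norm_tsum_le_tsum_norm hn
            _ ≤ ∑' m, g m := Summable.tsum_le_tsum hFg hFabs_sum hg_sum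
            _ ≤ c * (17 * Real.pi^2 / 6) := hg_tsum
  exact le_of_le_of_eq hmain (by ring)
end

section
/- For nonnegative integers k, l, n, m with l ≥ k, l ≥ n and m < l, the 3D eigenfrequencies ω_{k,l,n} = π√(k²+l²+n²) satisfy |ω_{k,l,n} − ω_{k,m,n}| ≥ π|l−m|/(2√3). -/
theorem stmt_19 (k l n m : ℕ) (hlk : l ≥ k) (hln : l ≥ n) (hml : m < l) :
    |ω3 k l n - ω3 k m n| ≥ Real.pi * |(l : ℝ) - (m : ℝ)| / (2 * Real.sqrt 3) := by
  have hπ := Real.pi_pos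
  have s3 : (0:ℝ) < Real.sqrt 3 := Real.sqrt_pos.mpr (by norm_num)
  have hs3 : Real.sqrt 3 ^ 2 = 3 := Real.sq_sqrt (by norm_num)
  set A : ℝ := (k:ℝ)^2 + (l:ℝ)^2 + (n:ℝ)^2 with hAdef
  set B : ℝ := (k:ℝ)^2 + (m:ℝ)^2 + (n:ℝ)^2 with hBdef
  have hA : 0 ≤ A := by positivity
  have hB : 0 ≤ B := by positivity
  have ha : Real.sqrt A ^ 2 = A := Real.sq_sqrt hA
  have hb : Real.sqrt B ^ 2 = B := Real.sq_sqrt hB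
  have ha0 := Real.sqrt_nonneg A
  have hb0 := Real.sqrt_nonneg B
  have hk : (k:ℝ) ≤ l := by exact_mod_cast hlk
  have hn : (n:ℝ) ≤ l := by exact_mod_cast hln
  have hm : (m:ℝ) < l := by exact_mod_cast hml
  have hk0 : (0:ℝ) ≤ k := Nat.cast_nonneg k
  have hm0 : (0:ℝ) ≤ m := Nat.cast_nonneg m
  have hn0 : (0:ℝ) ≤ n := Nat.cast_nonneg n
  have hl0 : (0:ℝ) < l := lt_of_le_of_lt hm0 hm
  have haleq : Real.sqrt A ≤ Real.sqrt 3 * l := by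
    rw [show Real.sqrt 3 * (l:ℝ) = Real.sqrt (3 * (l:ℝ)^2) by
      rw [Real.sqrt_mul (by norm_num), Real.sqrt_sq hl0.le]]
    apply Real.sqrt_le_sqrt; nlinarith
  have hbleq : Real.sqrt B ≤ Real.sqrt 3 * l := by
    rw [show Real.sqrt 3 * (l:ℝ) = Real.sqrt (3 * (l:ℝ)^2) by
      rw [Real.sqrt_mul (by norm_num), Real.sqrt_sq hl0.le]]
    apply Real.sqrt_le_sqrt; nlinarith
  have hd : Real.sqrt B ≤ Real.sqrt A := by
    apply Real.sqrt_le_sqrt; nlinarith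
  have key : Real.sqrt A - Real.sqrt B ≥ ((l:ℝ) - m) / (2 * Real.sqrt 3) := by
    rw [ge_iff_le, div_le_iff₀ (by positivity)]
    nlinarith [mul_le_mul_of_nonneg_left (add_le_add haleq hbleq) (sub_nonneg.mpr hd),
      mul_pos hl0 (sub_pos.mpr hm)]
  have habs1 : |(l:ℝ) - m| = (l:ℝ) - m := abs_of_pos (sub_pos.mpr hm)
  have habs2 : |ω3 k l n - ω3 k m n| = Real.pi * (Real.sqrt A - Real.sqrt B) := by
    rw [ω3, ω3, ← hAdef, ← hBdef, ← mul_sub, abs_of_nonneg]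
    exact mul_nonneg hπ.le (sub_nonneg.mpr hd)
  rw [habs1, habs2, mul_div_assoc]
  exact mul_le_mul_of_nonneg_left key Real.pi_pos.le
end
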